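/- arXiv:1006.1300 — 5 statements merged into one kernel-verified Lean document; each statement's English description precedes it below -/
import Mathlib

section
/- Suppose Γ is a k-uniform hypergraph and A_1,...,A_k are vertex subsets each of cardinality n with d = d(A_1,...,A_k). If 0 < α, β < 1/4 are such that d ≥ 2β and (A_1,...,A_k) is not (α,β)-superregular, then there are subsets B_i ⊆ A_i for i ∈ [k] with |B_1| = ⋯ = |B_k| ≥ α n and d(B_1,...,B_k) ≥ (1 + α^k/2)·d. -/
open Finset

noncomputable def hypEdgeCount {V : Type*} [Fintype V] [DecidableEq V] {k : ℕ}
    (Γ : Finset (Fin k → V)) (A : Fin k → Finset V) : ℕ :=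
  (Γ.filter fun x => ∀ i, x i ∈ A i).card

noncomputable def hypDensity {V : Type*} [Fintype V] [DecidableEq V] {k : ℕ}
    (Γ : Finset (Fin k → V)) (A : Fin k → Finset V) : ℝ :=
  (hypEdgeCount Γ A : ℝ) / ∏ i, ((A i).card : ℝ)

/-- `(A 0, …, A (k-1))` is `(α, β)`-superregular in `Γ` if every tuple of subsets
`U i ⊆ A i` with `|U i| ≥ α |A i|` satisfies `d(U) ≥ β`. -/
def Superregular {V : Type*} [Fintype V] [DecidableEq V] {k : ℕ}
    (Γ : Finset (Fin k → V)) (A : Fin k → Finset V) (α β : ℝ) : Prop :=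
  ∀ U : Fin k → Finset V, (∀ i, U i ⊆ A i) → (∀ i, α * (A i).card ≤ ((U i).card : ℝ)) →
    β ≤ hypDensity Γ U


section Helpers

variable {V : Type*} [Fintype V] [DecidableEq V] {k : ℕ}

lemma arith1 (d β a X M E : ℝ) (h2 : d*X - (1+a/2)*d*(X-M) ≤ E)
    (haX : a*X ≤ M) (hM : 0 ≤ M) (hd : 2*β ≤ d) (hβ : 0 < β) (ha : 0 ≤ a) :
    β * M ≤ E := by
  have hd0 : 0 ≤ d := by linarith
  have h3 : (d/2)*(a*(X-M)) ≤ (d/2)*M := by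
    have : a*(X-M) ≤ M := by nlinarith
    exact mul_le_mul_of_nonneg_left this (by linarith)
  nlinarith [mul_le_mul_of_nonneg_right hd hM]

lemma arith2 (D P Q eT eB : ℝ) (hTE : D*P ≤ eT) (hB4' : Q*eT ≤ P*eB)
    (hP : 0 < P) (hQ : 0 < Q) : D*Q ≤ eB := by
  nlinarith [mul_le_mul_of_nonneg_left hTE hQ.le]

lemma arith3 (P M eU eU' β : ℝ) (h1 : P*eU' ≤ M*eU) (h2 : eU < β*P)
    (hP : 0 < P) (hM : 0 < M) : eU' < β*M := by
  nlinarith [mul_lt_mul_of_pos_left h2 hM]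


lemma count_update (Γ : Finset (Fin k → V)) (A : Fin k → Finset V) (i : Fin k)
    (B : Finset V) (hB : B ⊆ A i) :
    hypEdgeCount Γ (Function.update A i B) =
      (Γ.filter fun x => (∀ j, x j ∈ A j) ∧ x i ∈ B).card := by
  unfold hypEdgeCount
  congr 1
  apply Finset.filter_congr
  intro x _
  constructor
  · intro h
    have hi : x i ∈ B := by simpa using h i
    refine ⟨fun j => ?_, hi⟩
    rcases eq_or_ne j i with rfl | hj
    · exact hB hi
    · simpa [Function.update_of_ne hj] using h j
  · rintro ⟨h1, h2⟩ j
    rcases eq_or_ne j i with rfl | hj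
    · simpa using h2
    · simpa [Function.update_of_ne hj] using h1 j

lemma count_split (Γ : Finset (Fin k → V)) (A : Fin k → Finset V) (i : Fin k)
    (B : Finset V) (hB : B ⊆ A i) :
    hypEdgeCount Γ A =
      hypEdgeCount Γ (Function.update A i B) +
        hypEdgeCount Γ (Function.update A i (A i \ B)) := by
  rw [count_update Γ A i B hB, count_update Γ A i (A i \ B) sdiff_subset]
  have h1 : (Γ.filter fun x => (∀ j, x j ∈ A j) ∧ x i ∈ B) =
      (Γ.filter fun x => ∀ j, x j ∈ A j).filter (fun x => x i ∈ B) := by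
    rw [Finset.filter_filter]
  have h2 : (Γ.filter fun x => (∀ j, x j ∈ A j) ∧ x i ∈ A i \ B) =
      (Γ.filter fun x => ∀ j, x j ∈ A j).filter (fun x => x i ∉ B) := by
    rw [Finset.filter_filter]
    apply Finset.filter_congr
    intro x _
    constructor
    · rintro ⟨h, hm⟩; exact ⟨h, (mem_sdiff.mp hm).2⟩
    · rintro ⟨h, hm⟩; exact ⟨h, mem_sdiff.mpr ⟨h i, hm⟩⟩
  rw [h1, h2]
  unfold hypEdgeCount
  rw [Finset.card_filter_add_card_filter_not]

lemma count_singletons (Γ : Finset (Fin k → V)) (A : Fin k → Finset V) (i : Fin k) :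
    ∑ v ∈ A i, hypEdgeCount Γ (Function.update A i {v}) = hypEdgeCount Γ A := by
  have h : hypEdgeCount Γ A =
      ∑ v ∈ A i, ((Γ.filter fun x => ∀ j, x j ∈ A j).filter fun x => x i = v).card := by
    exact Finset.card_eq_sum_card_fiberwise (fun x hx => (Finset.mem_filter.mp hx).2 i)
  rw [h]
  apply Finset.sum_congr rfl
  intro v hv
  rw [count_update Γ A i {v} (singleton_subset_iff.mpr hv), Finset.filter_filter]
  congr 1
  apply Finset.filter_congr
  intro x _
  simp

lemma sum_remove (Γ : Finset (Fin k → V)) (A : Fin k → Finset V) (i : Fin k) :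
    ∑ v ∈ A i, hypEdgeCount Γ (Function.update A i (A i \ {v})) =
      ((A i).card - 1) * hypEdgeCount Γ A := by
  have h1 : ∀ v ∈ A i, hypEdgeCount Γ A =
      hypEdgeCount Γ (Function.update A i {v}) +
        hypEdgeCount Γ (Function.update A i (A i \ {v})) :=
    fun v hv => count_split Γ A i {v} (singleton_subset_iff.mpr hv)
  have h2 : ∑ v ∈ A i, hypEdgeCount Γ A =
      ∑ v ∈ A i, hypEdgeCount Γ (Function.update A i {v}) +
        ∑ v ∈ A i, hypEdgeCount Γ (Function.update A i (A i \ {v})) := by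
    rw [← Finset.sum_add_distrib]
    exact Finset.sum_congr rfl h1
  rw [count_singletons] at h2
  rw [Finset.sum_const, smul_eq_mul] at h2
  set S := ∑ v ∈ A i, hypEdgeCount Γ (Function.update A i (A i \ {v}))
  have := h2
  rcases Nat.eq_zero_or_pos (A i).card with hc | hc
  · have : A i = ∅ := Finset.card_eq_zero.mp hc
    simp [S, this, hc]
  · have hc1 : (A i).card - 1 + 1 = (A i).card := Nat.succ_pred_eq_of_pos hc
    nlinarith [h2, hc1]

lemma exists_remove_ge (Γ : Finset (Fin k → V)) (A : Fin k → Finset V) (i : Fin k)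
    (h : (A i).Nonempty) :
    ∃ v ∈ A i, ((A i).card - 1) * hypEdgeCount Γ A ≤
      (A i).card * hypEdgeCount Γ (Function.update A i (A i \ {v})) := by
  apply Finset.exists_le_of_sum_le h
  rw [Finset.sum_const, smul_eq_mul, ← Finset.mul_sum, sum_remove]

lemma exists_remove_le (Γ : Finset (Fin k → V)) (A : Fin k → Finset V) (i : Fin k)
    (h : (A i).Nonempty) :
    ∃ v ∈ A i, (A i).card * hypEdgeCount Γ (Function.update A i (A i \ {v})) ≤
      ((A i).card - 1) * hypEdgeCount Γ A := by
  apply Finset.exists_le_of_sum_le h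
  rw [Finset.sum_const, smul_eq_mul, ← Finset.mul_sum, sum_remove]

lemma shrink_ge (Γ : Finset (Fin k → V)) (i : Fin k) (d : ℕ) :
    ∀ (A : Fin k → Finset V) (t : ℕ), (A i).card = t + d →
      ∃ B, B ⊆ A i ∧ B.card = t ∧
        t * hypEdgeCount Γ A ≤ (A i).card * hypEdgeCount Γ (Function.update A i B) := by
  induction d with
  | zero =>
    intro A t ht
    refine ⟨A i, Finset.Subset.refl _, by omega, ?_⟩
    rw [Function.update_eq_self, ht]
    exact le_of_eq (by ring)
  | succ d ih =>
    intro A t ht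
    rcases Nat.eq_zero_or_pos t with rfl | htpos
    · refine ⟨∅, Finset.empty_subset _, Finset.card_empty, by simp⟩
    have hne : (A i).Nonempty := Finset.card_pos.mp (by omega)
    obtain ⟨v, hv, hineq⟩ := exists_remove_ge Γ A i hne
    set A' := Function.update A i (A i \ {v}) with hA'
    have hA'i : A' i = A i \ {v} := Function.update_self i _ A
    have hA'card : (A' i).card = t + d := by
      rw [hA'i, Finset.card_sdiff_of_subset (singleton_subset_iff.mpr hv)]
      simp [ht]
    obtain ⟨B, hB1, hB2, hB3⟩ := ih A' t hA'card
    have hBA : B ⊆ A i := hB1.trans (hA'i ▸ Finset.sdiff_subset)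
    have hup : Function.update A' i B = Function.update A i B := by rw [Function.update_idem]
    rw [hup] at hB3
    refine ⟨B, hBA, hB2, ?_⟩
    rw [hA'card] at hB3
    rw [ht] at hineq ⊢
    have hineq' : (t + d) * hypEdgeCount Γ A ≤ (t + d + 1) * hypEdgeCount Γ A' := by
      have : t + (d + 1) - 1 = t + d := by omega
      rw [this] at hineq
      convert hineq using 2 <;> omega
    have key : (t + d) * (t * hypEdgeCount Γ A) ≤
        (t + d) * ((t + d + 1) * hypEdgeCount Γ (Function.update A i B)) := by
      calc (t + d) * (t * hypEdgeCount Γ A)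
          = t * ((t + d) * hypEdgeCount Γ A) := by ring
        _ ≤ t * ((t + d + 1) * hypEdgeCount Γ A') := Nat.mul_le_mul_left t hineq'
        _ = (t + d + 1) * (t * hypEdgeCount Γ A') := by ring
        _ ≤ (t + d + 1) * ((t + d) * hypEdgeCount Γ (Function.update A i B)) :=
            Nat.mul_le_mul_left _ hB3
        _ = (t + d) * ((t + d + 1) * hypEdgeCount Γ (Function.update A i B)) := by ring
    exact Nat.le_of_mul_le_mul_left key (by omega)

lemma shrink_le (Γ : Finset (Fin k → V)) (i : Fin k) (d : ℕ) :
    ∀ (A : Fin k → Finset V) (t : ℕ), (A i).card = t + d →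
      ∃ B, B ⊆ A i ∧ B.card = t ∧
        (A i).card * hypEdgeCount Γ (Function.update A i B) ≤ t * hypEdgeCount Γ A := by
  induction d with
  | zero =>
    intro A t ht
    refine ⟨A i, Finset.Subset.refl _, by omega, ?_⟩
    rw [Function.update_eq_self, ht]
    exact le_of_eq (by ring)
  | succ d ih =>
    intro A t ht
    have hne : (A i).Nonempty := Finset.card_pos.mp (by omega)
    obtain ⟨v, hv, hineq⟩ := exists_remove_le Γ A i hne
    set A' := Function.update A i (A i \ {v}) with hA'
    have hA'i : A' i = A i \ {v} := Function.update_self i _ A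
    have hA'card : (A' i).card = t + d := by
      rw [hA'i, Finset.card_sdiff_of_subset (singleton_subset_iff.mpr hv)]
      simp [ht]
    obtain ⟨B, hB1, hB2, hB3⟩ := ih A' t hA'card
    have hBA : B ⊆ A i := hB1.trans (hA'i ▸ Finset.sdiff_subset)
    have hup : Function.update A' i B = Function.update A i B := by rw [Function.update_idem]
    rw [hup] at hB3
    refine ⟨B, hBA, hB2, ?_⟩
    rw [hA'card] at hB3
    rw [ht] at hineq ⊢
    have hineq' : (t + d + 1) * hypEdgeCount Γ A' ≤ (t + d) * hypEdgeCount Γ A := by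
      have h9 : t + (d + 1) - 1 = t + d := by omega
      rw [h9] at hineq
      convert hineq using 2 <;> omega
    rcases Nat.eq_zero_or_pos (t + d) with htd | htd
    · have ht0 : t = 0 := by omega
      subst ht0
      have : hypEdgeCount Γ (Function.update A i B) = 0 := by
        have hB0 : B = ∅ := Finset.card_eq_zero.mp hB2
        subst hB0
        unfold hypEdgeCount
        rw [Finset.card_eq_zero, Finset.filter_eq_empty_iff]
        intro x _ h
        simpa using h i
      simp [this]
    have key : (t + d) * ((t + d + 1) * hypEdgeCount Γ (Function.update A i B)) ≤
        (t + d) * (t * hypEdgeCount Γ A) := by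
      calc (t + d) * ((t + d + 1) * hypEdgeCount Γ (Function.update A i B))
          = (t + d + 1) * ((t + d) * hypEdgeCount Γ (Function.update A i B)) := by ring
        _ ≤ (t + d + 1) * (t * hypEdgeCount Γ A') := Nat.mul_le_mul_left _ hB3
        _ = t * ((t + d + 1) * hypEdgeCount Γ A') := by ring
        _ ≤ t * ((t + d) * hypEdgeCount Γ A) := Nat.mul_le_mul_left t hineq'
        _ = (t + d) * (t * hypEdgeCount Γ A) := by ring
    exact Nat.le_of_mul_le_mul_left key htd

lemma shrink_all_ge (Γ : Finset (Fin k → V)) (t : Fin k → ℕ) (s : Finset (Fin k)) :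
    ∀ A : Fin k → Finset V, (∀ i ∈ s, t i ≤ (A i).card) →
      ∃ B : Fin k → Finset V, (∀ i, B i ⊆ A i) ∧ (∀ i ∈ s, (B i).card = t i) ∧
        (∀ i ∉ s, B i = A i) ∧
        (∏ i ∈ s, t i) * hypEdgeCount Γ A ≤
          (∏ i ∈ s, (A i).card) * hypEdgeCount Γ B := by
  induction s using Finset.induction_on with
  | empty =>
    intro A _
    exact ⟨A, fun i => Finset.Subset.refl _, by simp, fun i _ => rfl, by simp⟩
  | @insert a s ha ih =>
    intro A hts
    obtain ⟨Ba, hBa_sub, hBa_card, hBa_ineq⟩ :=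
      shrink_ge Γ a ((A a).card - t a) A (t a)
        (by have := hts a (mem_insert_self a s); omega)
    set A' := Function.update A a Ba with hA'
    have hA'a : A' a = Ba := Function.update_self a Ba A
    have hA'ne : ∀ i, i ≠ a → A' i = A i := fun i hi => Function.update_of_ne hi Ba A
    obtain ⟨B, hB1, hB2, hB3, hB4⟩ := ih A' (fun i hi => by
      rw [hA'ne i (fun h => ha (h ▸ hi))]
      exact hts i (mem_insert_of_mem hi))
    refine ⟨B, ?_, ?_, ?_, ?_⟩
    · intro i
      rcases eq_or_ne i a with rfl | hi
      · rw [hB3 i ha, hA'a]; exact hBa_sub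
      · exact (hB1 i).trans (le_of_eq (hA'ne i hi))
    · intro i hi
      rcases Finset.mem_insert.mp hi with rfl | hi'
      · rw [hB3 i ha, hA'a, hBa_card]
      · exact hB2 i hi'
    · intro i hi
      have hia : i ≠ a := fun h => hi (h ▸ mem_insert_self a s)
      have his : i ∉ s := fun h => hi (mem_insert_of_mem h)
      rw [hB3 i his, hA'ne i hia]
    · rw [Finset.prod_insert ha, Finset.prod_insert ha]
      have hprod : ∏ i ∈ s, (A' i).card = ∏ i ∈ s, (A i).card :=
        Finset.prod_congr rfl (fun i hi => by rw [hA'ne i (fun h => ha (h ▸ hi))])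
      calc (t a * ∏ i ∈ s, t i) * hypEdgeCount Γ A
          = (∏ i ∈ s, t i) * (t a * hypEdgeCount Γ A) := by ring
        _ ≤ (∏ i ∈ s, t i) * ((A a).card * hypEdgeCount Γ A') :=
            Nat.mul_le_mul_left _ hBa_ineq
        _ = (A a).card * ((∏ i ∈ s, t i) * hypEdgeCount Γ A') := by ring
        _ ≤ (A a).card * ((∏ i ∈ s, (A' i).card) * hypEdgeCount Γ B) :=
            Nat.mul_le_mul_left _ hB4
        _ = ((A a).card * ∏ i ∈ s, (A i).card) * hypEdgeCount Γ B := by rw [hprod]; ring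

lemma shrink_all_le (Γ : Finset (Fin k → V)) (t : Fin k → ℕ) (s : Finset (Fin k)) :
    ∀ A : Fin k → Finset V, (∀ i ∈ s, t i ≤ (A i).card) →
      ∃ B : Fin k → Finset V, (∀ i, B i ⊆ A i) ∧ (∀ i ∈ s, (B i).card = t i) ∧
        (∀ i ∉ s, B i = A i) ∧
        (∏ i ∈ s, (A i).card) * hypEdgeCount Γ B ≤
          (∏ i ∈ s, t i) * hypEdgeCount Γ A := by
  induction s using Finset.induction_on with
  | empty =>
    intro A _
    exact ⟨A, fun i => Finset.Subset.refl _, by simp, fun i _ => rfl, by simp⟩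
  | @insert a s ha ih =>
    intro A hts
    obtain ⟨Ba, hBa_sub, hBa_card, hBa_ineq⟩ :=
      shrink_le Γ a ((A a).card - t a) A (t a)
        (by have := hts a (mem_insert_self a s); omega)
    set A' := Function.update A a Ba with hA'
    have hA'a : A' a = Ba := Function.update_self a Ba A
    have hA'ne : ∀ i, i ≠ a → A' i = A i := fun i hi => Function.update_of_ne hi Ba A
    obtain ⟨B, hB1, hB2, hB3, hB4⟩ := ih A' (fun i hi => by
      rw [hA'ne i (fun h => ha (h ▸ hi))]
      exact hts i (mem_insert_of_mem hi))
    refine ⟨B, ?_, ?_, ?_, ?_⟩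
    · intro i
      rcases eq_or_ne i a with rfl | hi
      · rw [hB3 i ha, hA'a]; exact hBa_sub
      · exact (hB1 i).trans (le_of_eq (hA'ne i hi))
    · intro i hi
      rcases Finset.mem_insert.mp hi with rfl | hi'
      · rw [hB3 i ha, hA'a, hBa_card]
      · exact hB2 i hi'
    · intro i hi
      have hia : i ≠ a := fun h => hi (h ▸ mem_insert_self a s)
      have his : i ∉ s := fun h => hi (mem_insert_of_mem h)
      rw [hB3 i his, hA'ne i hia]
    · rw [Finset.prod_insert ha, Finset.prod_insert ha]
      have hprod : ∏ i ∈ s, (A' i).card = ∏ i ∈ s, (A i).card :=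
        Finset.prod_congr rfl (fun i hi => by rw [hA'ne i (fun h => ha (h ▸ hi))])
      calc ((A a).card * ∏ i ∈ s, (A i).card) * hypEdgeCount Γ B
          = (A a).card * ((∏ i ∈ s, (A' i).card) * hypEdgeCount Γ B) := by rw [hprod]; ring
        _ ≤ (A a).card * ((∏ i ∈ s, t i) * hypEdgeCount Γ A') :=
            Nat.mul_le_mul_left _ hB4
        _ = (∏ i ∈ s, t i) * ((A a).card * hypEdgeCount Γ A') := by ring
        _ ≤ (∏ i ∈ s, t i) * (t a * hypEdgeCount Γ A) :=
            Nat.mul_le_mul_left _ hBa_ineq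
        _ = (t a * ∏ i ∈ s, t i) * hypEdgeCount Γ A := by ring

lemma prod_card_update (A : Fin k → Finset V) (a : Fin k) (b : Finset V) :
    ∏ i, ((Function.update A a b) i).card = b.card * ∏ i ∈ univ \ {a}, (A i).card := by
  have h : (fun i => ((Function.update A a b) i).card) =
      Function.update (fun i => (A i).card) a b.card := by
    funext i
    rcases eq_or_ne i a with rfl | h
    · simp
    · simp [Function.update_of_ne h]
  rw [h]
  exact Finset.prod_update_of_mem (mem_univ a) _ _

-- telescoping helper
lemma telescope (f g : ℕ → ℕ) (K : ℕ) (h : ∀ j < K, f j = f (j + 1) + g j) :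
    f 0 = f K + ∑ j ∈ range K, g j := by
  induction K with
  | zero => simp
  | succ K ih =>
    rw [ih (fun j hj => h j (by omega)), Finset.sum_range_succ, h K (by omega)]
    ring

end Helpers

theorem stmt_1 {V : Type*} [Fintype V] [DecidableEq V] {k : ℕ}
    (Γ : Finset (Fin k → V)) (A : Fin k → Finset V) (n : ℕ)
    (hA : ∀ i, (A i).card = n) (α β : ℝ) (hα : 0 < α) (hα' : α < 1/4)
    (hβ : 0 < β) (hβ' : β < 1/4) (hd : 2 * β ≤ hypDensity Γ A)
    (hnotreg : ¬ Superregular Γ A α β) :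
    ∃ B : Fin k → Finset V, (∀ i, B i ⊆ A i) ∧
      (∀ i j, (B i).card = (B j).card) ∧
      (∀ i, α * n ≤ ((B i).card : ℝ)) ∧
      (1 + α ^ k / 2) * hypDensity Γ A ≤ hypDensity Γ B := by
  rw [Superregular] at hnotreg
  push_neg at hnotreg
  obtain ⟨U, hU1, hU2, hU3⟩ := hnotreg
  -- k = 0 is impossible
  rcases Nat.eq_zero_or_pos k with hk0 | hkpos
  · exfalso
    subst hk0
    have hall : ∀ W : Fin 0 → Finset V, hypDensity Γ W = Γ.card := by
      intro W
      unfold hypDensity hypEdgeCount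
      simp
    rw [hall] at hU3
    rw [hall] at hd
    linarith
  -- n = 0 is impossible
  rcases Nat.eq_zero_or_pos n with hn0 | hnpos
  · exfalso
    subst hn0
    have hz : hypDensity Γ A = 0 := by
      unfold hypDensity
      have h0 : ∏ i, ((A i).card : ℝ) = 0 := by
        apply Finset.prod_eq_zero (mem_univ (⟨0, hkpos⟩ : Fin k))
        rw [hA]; simp
      rw [h0, div_zero]
    rw [hz] at hd
    linarith
  -- n = 1 is impossible
  rcases eq_or_lt_of_le (show 1 ≤ n from hnpos) with hn1 | hn2
  · exfalso
    have hUA : U = A := by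
      funext i
      refine Finset.eq_of_subset_of_card_le (hU1 i) ?_
      have h2 := hU2 i
      rw [hA i] at h2
      have hc1 : 1 ≤ (U i).card := by
        by_contra hc
        have : (U i).card = 0 := by omega
        rw [this] at h2
        push_cast at h2
        have hn' : (0:ℝ) < n := by exact_mod_cast hnpos
        nlinarith
      rw [hA i]
      omega
    rw [hUA] at hU3
    linarith
  -- main case: n ≥ 2, k ≥ 1
  set m := ⌈α * n⌉₊ with hm_def
  have hn2' : (2:ℝ) ≤ n := by exact_mod_cast hn2
  have hαn0 : (0:ℝ) < α * n := by positivity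
  have hm_ge : (α * (n:ℝ)) ≤ m := Nat.le_ceil _
  have hm1 : 1 ≤ m := Nat.ceil_pos.mpr hαn0
  have hm_lt : (m:ℝ) < α * n + 1 := Nat.ceil_lt_add_one (le_of_lt hαn0)
  have hm_le_real : (m:ℝ) ≤ (1 - α) * n := by nlinarith
  have hmn : m < n := by
    have : (m:ℝ) < n := by nlinarith
    exact_mod_cast this
  have h2m : 2 * m ≤ n := by
    rcases le_or_gt 4 n with h4 | h4
    · have h4' : (4:ℝ) ≤ n := by exact_mod_cast h4
      have : (2 * m : ℝ) < n := by push_cast; nlinarith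
      have : 2 * m < n := by exact_mod_cast this
      omega
    · have h3' : (n:ℝ) ≤ 3 := by exact_mod_cast (by omega : n ≤ 3)
      have : m ≤ 1 := Nat.ceil_le.mpr (by push_cast; nlinarith)
      omega
  -- shrink U to sizes exactly m
  have hUcge : ∀ i, m ≤ (U i).card := by
    intro i
    apply Nat.ceil_le.mpr
    have := hU2 i
    rw [hA i] at this
    exact this
  obtain ⟨U', hU'sub, hU'card, hU'eq, hU'ineq⟩ :=
    shrink_all_le Γ (fun _ => m) univ U (fun i _ => hUcge i)
  have hU'c : ∀ i, (U' i).card = m := fun i => hU'card i (mem_univ i)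
  have hU'A : ∀ i, U' i ⊆ A i := fun i => (hU'sub i).trans (hU1 i)
  have hPU : (0:ℝ) < ∏ i, ((U i).card : ℝ) := by
    apply Finset.prod_pos
    intro i _
    have := hUcge i
    have : 0 < (U i).card := by omega
    exact_mod_cast this
  have hmkpos : (0:ℝ) < (m:ℝ)^k := by
    have : (0:ℝ) < m := by exact_mod_cast hm1
    positivity
  have heU : (hypEdgeCount Γ U : ℝ) < β * ∏ i, ((U i).card:ℝ) := by
    unfold hypDensity at hU3
    rw [div_lt_iff₀ hPU] at hU3
    exact hU3
  have hU'β : (hypEdgeCount Γ U' : ℝ) < β * (m:ℝ)^k := by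
    have hineqR : (∏ i, ((U i).card:ℝ)) * (hypEdgeCount Γ U' : ℝ) ≤
        (m:ℝ)^k * (hypEdgeCount Γ U : ℝ) := by
      have h := hU'ineq
      rw [Finset.prod_const, card_univ, Fintype.card_fin] at h
      exact_mod_cast h
    exact arith3 _ _ _ _ _ hineqR heU hPU hmkpos
  -- telescoping setup
  set d := hypDensity Γ A with hd_def
  set D := (1 + α^k/2) * d with hD_def
  set W : ℕ → (Fin k → Finset V) := fun j i => if (i:ℕ) < j then U' i else A i with hW
  set T : ℕ → (Fin k → Finset V) :=
    fun j i => if (i:ℕ) < j then U' i else if (i:ℕ) = j then A i \ U' i else A i with hT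
  have hW0 : W 0 = A := funext fun i => by simp [hW]
  have hWk : W k = U' := funext fun i => by simp [hW, i.isLt]
  have hupd : ∀ j, ∀ hj : j < k,
      Function.update (W j) ⟨j, hj⟩ (U' ⟨j, hj⟩) = W (j+1) ∧
      Function.update (W j) ⟨j, hj⟩ ((W j) ⟨j, hj⟩ \ U' ⟨j, hj⟩) = T j ∧
      (W j) (⟨j, hj⟩ : Fin k) = A ⟨j, hj⟩ := by
    intro j hj
    have hWjF : (W j) (⟨j, hj⟩ : Fin k) = A ⟨j, hj⟩ := by simp [hW]
    refine ⟨?_, ?_, hWjF⟩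
    · funext i
      rw [Function.update_apply]
      split_ifs with h
      · subst h; simp [hW]
      · have hij : (i:ℕ) ≠ j := fun hc => h (Fin.ext hc)
        simp only [hW]
        by_cases h2 : (i:ℕ) < j
        · rw [if_pos h2, if_pos (by omega)]
        · rw [if_neg h2, if_neg (by omega)]
    · funext i
      rw [Function.update_apply]
      split_ifs with h
      · subst h
        rw [hWjF]
        simp only [hT]
        simp
      · have hij : (i:ℕ) ≠ j := fun hc => h (Fin.ext hc)
        simp only [hW, hT]
        by_cases h2 : (i:ℕ) < j
        · rw [if_pos h2, if_pos h2]
        · rw [if_neg h2, if_neg h2, if_neg hij]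
  have hstep : ∀ j < k, hypEdgeCount Γ (W j) =
      hypEdgeCount Γ (W (j+1)) + hypEdgeCount Γ (T j) := by
    intro j hj
    obtain ⟨h1, h2, h3⟩ := hupd j hj
    have hsub : U' ⟨j, hj⟩ ⊆ (W j) ⟨j, hj⟩ := by rw [h3]; exact hU'A _
    have := count_split Γ (W j) ⟨j, hj⟩ (U' ⟨j, hj⟩) hsub
    rw [h1, h2] at this
    exact this
  have hpstep : ∀ j < k, ∏ i, ((W j) i).card =
      ∏ i, ((W (j+1)) i).card + ∏ i, ((T j) i).card := by
    intro j hj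
    obtain ⟨h1, h2, h3⟩ := hupd j hj
    have e1 : ∏ i, ((W (j+1)) i).card =
        m * ∏ i ∈ univ \ {(⟨j, hj⟩ : Fin k)}, ((W j) i).card := by
      rw [← h1, prod_card_update, hU'c]
    have e2 : ∏ i, ((T j) i).card =
        (n - m) * ∏ i ∈ univ \ {(⟨j, hj⟩ : Fin k)}, ((W j) i).card := by
      rw [← h2, prod_card_update, h3, Finset.card_sdiff_of_subset (hU'A _), hA, hU'c]
    have e3 : ∏ i, ((W j) i).card =
        n * ∏ i ∈ univ \ {(⟨j, hj⟩ : Fin k)}, ((W j) i).card := by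
      rw [Finset.prod_eq_mul_prod_sdiff_singleton_of_mem (mem_univ (⟨j, hj⟩ : Fin k)), h3, hA]
    rw [e1, e2, e3, ← Nat.add_mul]
    congr 1
    omega
  have hE := telescope (fun j => hypEdgeCount Γ (W j)) (fun j => hypEdgeCount Γ (T j)) k hstep
  beta_reduce at hE
  rw [hW0, hWk] at hE
  have hP := telescope (fun j => ∏ i, ((W j) i).card) (fun j => ∏ i, ((T j) i).card) k hpstep
  beta_reduce at hP
  rw [hW0, hWk] at hP
  have hPA : ∏ i, (A i).card = n^k := by
    rw [Finset.prod_congr rfl (fun i _ => hA i), Finset.prod_const, card_univ, Fintype.card_fin]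
  have hPU' : ∏ i, (U' i).card = m^k := by
    rw [Finset.prod_congr rfl (fun i _ => hU'c i), Finset.prod_const, card_univ, Fintype.card_fin]
  rw [hPA, hPU'] at hP
  have hnkpos : (0:ℝ) < (n:ℝ)^k := by positivity
  have hPA' : ∏ i, ((A i).card : ℝ) = (n:ℝ)^k := by
    rw [Finset.prod_congr rfl (fun i (_ : i ∈ univ) => by rw [hA i]), Finset.prod_const,
      card_univ, Fintype.card_fin]
  have heA : (hypEdgeCount Γ A : ℝ) = d * (n:ℝ)^k := by
    rw [hd_def]
    unfold hypDensity
    rw [hPA']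
    field_simp
  have hdpos : 0 < d := by linarith
  have hαk : α^k * (n:ℝ)^k ≤ (m:ℝ)^k := by
    have h := pow_le_pow_left₀ (le_of_lt hαn0) hm_ge k
    rw [mul_pow] at h
    exact h
  have hmn' : (m:ℝ)^k ≤ (n:ℝ)^k := by
    apply pow_le_pow_left₀ (by positivity)
    exact_mod_cast hmn.le
  by_cases hex : ∃ j, j < k ∧ D ≤ hypDensity Γ (T j)
  · -- good part exists: shrink it
    obtain ⟨j, hj, hDT⟩ := hex
    have hTcard : ∀ i, m ≤ ((T j) i).card := by
      intro i
      simp only [hT]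
      split_ifs with h1 h2
      · rw [hU'c i]
      · rw [Finset.card_sdiff_of_subset (hU'A i), hA i, hU'c i]; omega
      · rw [hA i]; omega
    obtain ⟨B, hB1, hB2, hB3, hB4⟩ :=
      shrink_all_ge Γ (fun _ => m) univ (T j) (fun i _ => hTcard i)
    have hBc : ∀ i, (B i).card = m := fun i => hB2 i (mem_univ i)
    have hTA : ∀ i, (T j) i ⊆ A i := by
      intro i
      simp only [hT]
      split_ifs with h1 h2
      · exact hU'A i
      · exact sdiff_subset
      · exact Finset.Subset.refl _
    refine ⟨B, fun i => (hB1 i).trans (hTA i), fun i i' => by rw [hBc i, hBc i'],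
      fun i => by rw [hBc i]; exact hm_ge, ?_⟩
    have hPT : (0:ℝ) < ∏ i, (((T j) i).card:ℝ) := by
      apply Finset.prod_pos
      intro i _
      have := hTcard i
      have : 0 < ((T j) i).card := by omega
      exact_mod_cast this
    have hBden : hypDensity Γ B = (hypEdgeCount Γ B : ℝ) / (m:ℝ)^k := by
      unfold hypDensity
      rw [Finset.prod_congr rfl (fun i (_ : i ∈ univ) => by rw [hBc i]), Finset.prod_const,
        card_univ, Fintype.card_fin]
    have hTE : D * ∏ i, (((T j) i).card:ℝ) ≤ (hypEdgeCount Γ (T j) : ℝ) := by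
      unfold hypDensity at hDT
      rw [le_div_iff₀ hPT] at hDT
      exact hDT
    have hB4' : ((m:ℝ)^k) * (hypEdgeCount Γ (T j) : ℝ) ≤
        (∏ i, (((T j) i).card:ℝ)) * (hypEdgeCount Γ B : ℝ) := by
      have h := hB4
      rw [Finset.prod_const, card_univ, Fintype.card_fin] at h
      exact_mod_cast h
    rw [hBden, le_div_iff₀ hmkpos]
    exact arith2 _ _ _ _ _ hTE hB4' hPT hmkpos
  · -- otherwise contradiction
    exfalso
    push_neg at hex
    have hTpos : ∀ j < k, (0:ℝ) < ∏ i, (((T j) i).card : ℝ) := by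
      intro j hj
      apply Finset.prod_pos
      intro i _
      have h0 : 0 < ((T j) i).card := by
        simp only [hT]
        split_ifs with h1 h2
        · rw [hU'c i]; omega
        · rw [Finset.card_sdiff_of_subset (hU'A i), hA i, hU'c i]; omega
        · rw [hA i]; omega
      exact_mod_cast h0
    have hTle : ∀ j < k, (hypEdgeCount Γ (T j) : ℝ) ≤ D * ∏ i, (((T j) i).card:ℝ) := by
      intro j hj
      have h := hex j hj
      unfold hypDensity at h
      rw [div_lt_iff₀ (hTpos j hj)] at h
      linarith
    have hsumT : ∑ j ∈ range k, (hypEdgeCount Γ (T j) : ℝ) ≤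
        D * ∑ j ∈ range k, ∏ i, (((T j) i).card:ℝ) := by
      rw [Finset.mul_sum]
      exact Finset.sum_le_sum (fun j hj => hTle j (mem_range.mp hj))
    have hE' : (hypEdgeCount Γ A : ℝ) =
        (hypEdgeCount Γ U' : ℝ) + ∑ j ∈ range k, (hypEdgeCount Γ (T j):ℝ) := by
      exact_mod_cast congrArg (Nat.cast (R := ℝ)) hE
    have hP' : (n:ℝ)^k = (m:ℝ)^k + ∑ j ∈ range k, ∏ i, (((T j) i).card:ℝ) := by
      have := congrArg (Nat.cast (R := ℝ)) hP
      push_cast at this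
      exact this
    have hSp : ∑ j ∈ range k, ∏ i, (((T j) i).card:ℝ) = (n:ℝ)^k - (m:ℝ)^k := by
      linarith
    rw [hSp] at hsumT
    have h2 : d * (n:ℝ)^k - D * ((n:ℝ)^k - (m:ℝ)^k) ≤ (hypEdgeCount Γ U':ℝ) := by
      rw [← heA]
      linarith
    rw [hD_def] at h2
    have hkey : β * (m:ℝ)^k ≤ (hypEdgeCount Γ U' : ℝ) :=
      arith1 d β (α^k) ((n:ℝ)^k) ((m:ℝ)^k) _ h2 hαk (le_of_lt hmkpos) hd hβ (by positivity)
    linarith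
end

section
/- Let f(x) = x log x for x > 0 and f(0) = 0. Let ε_1,...,ε_s and x_1,...,x_s be nonnegative real numbers with ∑_{i=1}^{s} ε_i = 1, and a = ∑_{i=1}^{s} ε_i x_i. Suppose β < 1 and I ⊆ [s] is such that x_i ≤ β·a for all i ∈ I, and let c = ∑_{i ∈ I} ε_i. Then ∑_{i=1}^{s} ε_i f(x_i) ≥ f(a) + (1 − β + f(β))·c·a. -/
open Finset

/-- The function `f(x) = x log x` (with `f(0) = 0`). -/
noncomputable def entf (x : ℝ) : ℝ := x * Real.log x

theorem stmt_5 {s : ℕ} (ε x : Fin s → ℝ) (hε : ∀ i, 0 ≤ ε i) (hx : ∀ i, 0 ≤ x i)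
    (hsum : ∑ i, ε i = 1) (a : ℝ) (ha : a = ∑ i, ε i * x i)
    (β : ℝ) (hβ : β < 1) (I : Finset (Fin s)) (hI : ∀ i ∈ I, x i ≤ β * a)
    (c : ℝ) (hc : c = ∑ i ∈ I, ε i) :
    entf a + (1 - β + entf β) * c * a ≤ ∑ i, ε i * entf (x i) := by
  have ha0 : 0 ≤ a := ha ▸ Finset.sum_nonneg (fun i _ => mul_nonneg (hε i) (hx i))
  rcases eq_or_lt_of_le ha0 with h0 | hpos
  · -- a = 0 case
    have hA : a = 0 := h0.symm
    rw [hA]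
    simp only [entf, mul_zero, zero_mul, Real.log_zero, add_zero, zero_add]
    have hz : ∀ i ∈ Finset.univ, ε i * x i = 0 := by
      rw [← Finset.sum_eq_zero_iff_of_nonneg (fun i _ => mul_nonneg (hε i) (hx i))]
      rw [← ha, hA]
    apply Finset.sum_nonneg
    intro i _
    rcases mul_eq_zero.mp (hz i (Finset.mem_univ i)) with he | hx0
    · simp [he]
    · simp [hx0]
  · -- a > 0 case
    set L := Real.log a + 1 with hL
    have tangent : ∀ y : ℝ, 0 ≤ y → L * (y - a) + entf a ≤ entf y := by
      intro y hy
      rcases eq_or_lt_of_le hy with h0' | hy'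
      · rw [← h0']
        simp only [entf, Real.log_zero, mul_zero, zero_mul, hL]
        nlinarith
      · have h := Real.log_le_sub_one_of_pos (div_pos hpos hy')
        rw [Real.log_div hpos.ne' hy'.ne'] at h
        have h2 : y * (Real.log a - Real.log y) ≤ y * (a / y - 1) :=
          mul_le_mul_of_nonneg_left h hy'.le
        have h3 : y * (a / y - 1) = a - y := by field_simp
        simp only [entf, hL]
        nlinarith
    have better : ∀ i ∈ I, L * (x i - a) + entf a + (1 - β + entf β) * a ≤ entf (x i) := by
      intro i hi
      have hyb : x i ≤ β * a := hI i hi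
      have hβ0 : 0 ≤ β := by nlinarith [hx i]
      have hlogβ : Real.log β ≤ 0 := Real.log_nonpos hβ0 hβ.le
      rcases eq_or_lt_of_le (hx i) with h0' | hy'
      · rw [← h0']
        simp only [entf, Real.log_zero, mul_zero, zero_mul, hL]
        nlinarith [mul_nonneg (mul_nonneg hβ0 hpos.le) (by linarith : (0:ℝ) ≤ 1 - Real.log β)]
      · have hβpos : 0 < β := by nlinarith
        have h := Real.log_le_sub_one_of_pos (div_pos (mul_pos hβpos hpos) hy')
        rw [Real.log_div (mul_pos hβpos hpos).ne' hy'.ne',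
          Real.log_mul hβpos.ne' hpos.ne'] at h
        have h2 : x i * (Real.log β + Real.log a - Real.log (x i)) ≤ x i * (β * a / x i - 1) :=
          mul_le_mul_of_nonneg_left h hy'.le
        have h3 : x i * (β * a / x i - 1) = β * a - x i := by field_simp
        have h4 : (0:ℝ) ≤ (β * a - x i) * (-Real.log β) :=
          mul_nonneg (sub_nonneg.mpr hyb) (neg_nonneg.mpr hlogβ)
        simp only [entf, hL]
        nlinarith
    have e1 : ∑ i, ε i * (x i - a) = 0 := by
      simp only [mul_sub, Finset.sum_sub_distrib, ← ha, ← Finset.sum_mul, hsum]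
      ring
    have hsplit : ∑ i, ε i * entf (x i)
        = entf a + ∑ i, ε i * (entf (x i) - L * (x i - a) - entf a) := by
      have e2 : ∑ i, ε i * (entf (x i) - L * (x i - a) - entf a)
          = ∑ i, ε i * entf (x i) - L * (∑ i, ε i * (x i - a)) - entf a * (∑ i, ε i) := by
        rw [Finset.mul_sum, Finset.mul_sum]
        rw [← Finset.sum_sub_distrib, ← Finset.sum_sub_distrib]
        apply Finset.sum_congr rfl
        intro i _
        ring
      rw [e2, e1, hsum]
      ring
    rw [hsplit]
    have step1 : ∑ i ∈ I, ε i * ((1 - β + entf β) * a)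
        ≤ ∑ i, ε i * (entf (x i) - L * (x i - a) - entf a) := by
      calc ∑ i ∈ I, ε i * ((1 - β + entf β) * a)
          ≤ ∑ i ∈ I, ε i * (entf (x i) - L * (x i - a) - entf a) := by
            apply Finset.sum_le_sum
            intro i hi
            exact mul_le_mul_of_nonneg_left (by linarith [better i hi]) (hε i)
        _ ≤ ∑ i, ε i * (entf (x i) - L * (x i - a) - entf a) := by
            apply Finset.sum_le_sum_of_subset_of_nonneg (Finset.subset_univ I)
            intro i _ _
            exact mul_nonneg (hε i) (by linarith [tangent (x i) (hx i)])
    have e3 : ∑ i ∈ I, ε i * ((1 - β + entf β) * a) = (1 - β + entf β) * c * a := by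
      rw [← Finset.sum_mul, ← hc]
      ring
    linarith
end

section
/- Let f : ℝ_{≥0} → ℝ be a convex function and G = (V,E) a graph. If 𝒫 and 𝒫' are partitions of V and 𝒫' is a refinement of 𝒫, then f(𝒫') ≥ f(𝒫), where f(𝒬) = ∑_{A,B ∈ 𝒬} (|A||B|/|V|²)·f(d(A,B)). -/
open Finset

variable {V : Type*} [Fintype V] [DecidableEq V]

/-- The number of pairs `(a, b) ∈ A × B` that are edges of `G`. -/
def edgeCount (G : SimpleGraph V) [DecidableRel G.Adj] (A B : Finset V) : ℕ :=
  ((A ×ˢ B).filter fun p => G.Adj p.1 p.2).card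

/-- The edge density `d(A, B) = e(A, B) / (|A| |B|)`. -/
noncomputable def density (G : SimpleGraph V) [DecidableRel G.Adj] (A B : Finset V) : ℝ :=
  (edgeCount G A B : ℝ) / ((A.card : ℝ) * (B.card : ℝ))

/-- `f(A, B) = (|A||B|/|V|²) f(d(A, B))`. -/
noncomputable def fPair (f : ℝ → ℝ) (G : SimpleGraph V) [DecidableRel G.Adj]
    (A B : Finset V) : ℝ :=
  ((A.card : ℝ) * (B.card : ℝ) / (Fintype.card V : ℝ) ^ 2) * f (density G A B)

/-- `f(𝒜, ℬ) = ∑_{A' ∈ 𝒜, B' ∈ ℬ} f(A', B')`. -/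
noncomputable def fPart (f : ℝ → ℝ) (G : SimpleGraph V) [DecidableRel G.Adj]
    {A B : Finset V} (𝒜 : Finpartition A) (ℬ : Finpartition B) : ℝ :=
  ∑ A' ∈ 𝒜.parts, ∑ B' ∈ ℬ.parts, fPair f G A' B'

lemma part_eq_biUnion (P Q : Finpartition (Finset.univ : Finset V)) (href : Q ≤ P)
    {A : Finset V} (hA : A ∈ P.parts) :
    A = (Q.parts.filter (· ⊆ A)).biUnion id := by
  ext x
  simp only [mem_biUnion, mem_filter, id]
  constructor
  · intro hx
    obtain ⟨B, hB, hxB⟩ := Q.exists_mem (mem_univ x)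
    obtain ⟨A', hA', hBA'⟩ := href hB
    have hAA : A' = A := P.eq_of_mem_parts hA' hA (hBA' hxB) hx
    exact ⟨B, ⟨hB, hAA ▸ hBA'⟩, hxB⟩
  · rintro ⟨B, ⟨hB, hBA⟩, hxB⟩; exact hBA hxB

lemma fPair_le (f : ℝ → ℝ) (hf : ConvexOn ℝ (Set.Ici 0) f)
    (G : SimpleGraph V) [DecidableRel G.Adj]
    (Q : Finpartition (Finset.univ : Finset V))
    {A B : Finset V} (hA : A.Nonempty) (hB : B.Nonempty)
    (hAeq : A = (Q.parts.filter (· ⊆ A)).biUnion id)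
    (hBeq : B = (Q.parts.filter (· ⊆ B)).biUnion id) :
    fPair f G A B ≤
      ∑ A' ∈ Q.parts.filter (· ⊆ A), ∑ B' ∈ Q.parts.filter (· ⊆ B), fPair f G A' B' := by
  classical
  set SA := Q.parts.filter (· ⊆ A) with hSA
  set SB := Q.parts.filter (· ⊆ B) with hSB
  have hdA : (↑SA : Set (Finset V)).PairwiseDisjoint id :=
    Q.disjoint.subset (by exact_mod_cast filter_subset _ _)
  have hdB : (↑SB : Set (Finset V)).PairwiseDisjoint id :=
    Q.disjoint.subset (by exact_mod_cast filter_subset _ _)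
  have hcardA : A.card = ∑ A' ∈ SA, A'.card := by
    conv_lhs => rw [hAeq]
    exact card_biUnion fun x hx y hy hxy => hdA (mem_coe.mpr hx) (mem_coe.mpr hy) hxy
  have hcardB : B.card = ∑ B' ∈ SB, B'.card := by
    conv_lhs => rw [hBeq]
    exact card_biUnion fun x hx y hy hxy => hdB (mem_coe.mpr hx) (mem_coe.mpr hy) hxy
  have key : ∀ g : V → V → ℕ, ∑ a ∈ A, ∑ b ∈ B, g a b
      = ∑ A' ∈ SA, ∑ B' ∈ SB, ∑ a ∈ A', ∑ b ∈ B', g a b := by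
    intro g
    conv_lhs => rw [hAeq, hBeq]
    rw [sum_biUnion hdA]
    refine sum_congr rfl fun A' _ => ?_
    rw [sum_comm, sum_biUnion hdB]
    exact sum_congr rfl fun B' _ => sum_comm
  have hEC : edgeCount G A B = ∑ A' ∈ SA, ∑ B' ∈ SB, edgeCount G A' B' := by
    simp only [edgeCount, card_filter, sum_product]
    exact key _
  have hApos : (0 : ℝ) < A.card := by exact_mod_cast hA.card_pos
  have hBpos : (0 : ℝ) < B.card := by exact_mod_cast hB.card_pos
  have hA0 : ((A.card : ℝ)) ≠ 0 := hApos.ne'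
  have hB0 : ((B.card : ℝ)) ≠ 0 := hBpos.ne'
  have hne : ∀ C ∈ SA ∪ SB, (0 : ℝ) < C.card := by
    intro C hC
    have hCQ : C ∈ Q.parts := by
      rcases mem_union.mp hC with h | h
      exacts [(mem_filter.mp h).1, (mem_filter.mp h).1]
    exact_mod_cast (Q.nonempty_of_mem_parts hCQ).card_pos
  set t := SA ×ˢ SB with ht
  set w : Finset V × Finset V → ℝ :=
    fun p => (p.1.card : ℝ) * (p.2.card : ℝ) / ((A.card : ℝ) * (B.card : ℝ)) with hw
  set pt : Finset V × Finset V → ℝ := fun p => density G p.1 p.2 with hpt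
  have h₀ : ∀ p ∈ t, 0 ≤ w p := fun p _ => div_nonneg (mul_nonneg (Nat.cast_nonneg _) (Nat.cast_nonneg _)) (mul_nonneg (Nat.cast_nonneg _) (Nat.cast_nonneg _))
  have h₁ : ∑ p ∈ t, w p = 1 := by
    rw [ht, sum_product]
    simp only [hw, div_eq_mul_inv, ← sum_mul]
    rw [show (∑ i ∈ SA, ∑ j ∈ SB, (i.card : ℝ) * (j.card : ℝ))
        = ((A.card : ℝ) * (B.card : ℝ)) by
      rw [← sum_mul_sum SA SB (fun i => (i.card : ℝ)) (fun j => (j.card : ℝ)),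
        hcardA, hcardB]; push_cast; rfl]
    exact mul_inv_cancel₀ (mul_ne_zero hA0 hB0)
  have hmem : ∀ p ∈ t, pt p ∈ Set.Ici (0 : ℝ) := by
    intro p _
    simp only [hpt, density, Set.mem_Ici]
    exact div_nonneg (Nat.cast_nonneg _) (mul_nonneg (Nat.cast_nonneg _) (Nat.cast_nonneg _))
  have hterm : ∀ A' ∈ SA, ∀ B' ∈ SB, w (A', B') • pt (A', B')
      = (edgeCount G A' B' : ℝ) / ((A.card : ℝ) * (B.card : ℝ)) := by
    intro A' hA' B' hB'
    have h1 : (0 : ℝ) < A'.card := hne _ (mem_union_left _ hA')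
    have h2 : (0 : ℝ) < B'.card := hne _ (mem_union_right _ hB')
    have h1' : ((A'.card : ℝ)) ≠ 0 := h1.ne'
    have h2' : ((B'.card : ℝ)) ≠ 0 := h2.ne'
    simp only [hw, hpt, smul_eq_mul, density]
    field_simp
  have hsum : ∑ p ∈ t, w p • pt p = density G A B := by
    rw [ht, sum_product]
    rw [sum_congr rfl fun A' hA' => sum_congr rfl fun B' hB' => hterm A' hA' B' hB']
    simp only [div_eq_mul_inv, ← sum_mul]
    rw [show (∑ i ∈ SA, ∑ j ∈ SB, (edgeCount G i j : ℝ))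
        = ((∑ i ∈ SA, ∑ j ∈ SB, edgeCount G i j : ℕ) : ℝ) by push_cast; rfl]
    rw [← hEC, density, div_eq_mul_inv]
  have jensen := hf.map_sum_le h₀ h₁ hmem
  have hfinal : ((A.card : ℝ) * (B.card : ℝ) / (Fintype.card V : ℝ) ^ 2)
        * ∑ p ∈ t, w p • f (pt p)
      = ∑ A' ∈ SA, ∑ B' ∈ SB, fPair f G A' B' := by
    rw [ht, sum_product, mul_sum]
    refine sum_congr rfl fun A' hA' => ?_
    rw [mul_sum]
    refine sum_congr rfl fun B' hB' => ?_
    simp only [hw, hpt, smul_eq_mul, fPair]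
    rw [← mul_assoc, div_mul_div_comm,
      mul_comm ((A.card : ℝ) * B.card) ((A'.card : ℝ) * B'.card),
      mul_div_mul_right _ _ (mul_ne_zero hA0 hB0)]
  calc fPair f G A B
      = ((A.card : ℝ) * (B.card : ℝ) / (Fintype.card V : ℝ) ^ 2) * f (density G A B) := rfl
    _ ≤ ((A.card : ℝ) * (B.card : ℝ) / (Fintype.card V : ℝ) ^ 2)
        * ∑ p ∈ t, w p • f (pt p) := by
        refine mul_le_mul_of_nonneg_left ?_ (div_nonneg (mul_nonneg (Nat.cast_nonneg _) (Nat.cast_nonneg _)) (sq_nonneg _))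
        rw [← hsum]
        exact jensen
    _ = ∑ A' ∈ SA, ∑ B' ∈ SB, fPair f G A' B' := hfinal

theorem stmt_9 {V : Type*} [Fintype V] [DecidableEq V]
    (f : ℝ → ℝ) (hf : ConvexOn ℝ (Set.Ici 0) f)
    (G : SimpleGraph V) [DecidableRel G.Adj]
    (P Q : Finpartition (Finset.univ : Finset V)) (href : Q ≤ P) :
    fPart f G P P ≤ fPart f G Q Q := by
  classical
  have hdisj : (↑P.parts : Set (Finset V)).PairwiseDisjoint
      (fun A => Q.parts.filter (· ⊆ A)) := by
    intro A1 h1 A2 h2 hne12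
    refine Finset.disjoint_left.mpr fun B hB1 hB2 => ?_
    obtain ⟨hBQ, hBA1⟩ := mem_filter.mp hB1
    obtain ⟨_, hBA2⟩ := mem_filter.mp hB2
    obtain ⟨x, hx⟩ := Q.nonempty_of_mem_parts hBQ
    exact Finset.disjoint_left.mp (P.disjoint h1 h2 hne12) (hBA1 hx) (hBA2 hx)
  have hgroup : ∀ g : Finset V → ℝ, ∑ B ∈ Q.parts, g B =
      ∑ A ∈ P.parts, ∑ B ∈ Q.parts.filter (· ⊆ A), g B := by
    intro g
    rw [← sum_biUnion hdisj]
    congr 1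
    ext B
    simp only [mem_biUnion, mem_filter]
    constructor
    · intro hB
      obtain ⟨A, hA, hBA⟩ := href hB
      exact ⟨A, hA, hB, hBA⟩
    · rintro ⟨A, _, hB, _⟩; exact hB
  rw [fPart, fPart]
  rw [hgroup (fun A' => ∑ B' ∈ Q.parts, fPair f G A' B')]
  have h2 : ∑ A ∈ P.parts, ∑ A' ∈ Q.parts.filter (· ⊆ A), ∑ B' ∈ Q.parts, fPair f G A' B'
      = ∑ A ∈ P.parts, ∑ A' ∈ Q.parts.filter (· ⊆ A), ∑ B ∈ P.parts,
          ∑ B' ∈ Q.parts.filter (· ⊆ B), fPair f G A' B' :=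
    sum_congr rfl fun A _ => sum_congr rfl fun A' _ => hgroup _
  rw [h2]
  refine sum_le_sum fun A hA => ?_
  rw [sum_comm]
  refine sum_le_sum fun B hB => ?_
  exact fPair_le f hf G Q (P.nonempty_of_mem_parts hA) (P.nonempty_of_mem_parts hB)
    (part_eq_biUnion P Q href hA) (part_eq_biUnion P Q href hB)
end

section
/- Let f(x) = x log x for x > 0 and f(0) = 0, and let G = (V,E) be a graph. Suppose A, B are disjoint vertex subsets with d(A,B) ≥ 10α, and partitions 𝒜 of A and ℬ of B form an (α,c,t)-shattering of (A,B). Then f(𝒜,ℬ) ≥ f(A,B) + (c/2)·e(A,B)/|V|², where f(A,B) = (|A||B|/|V|²)f(d(A,B)) and f(𝒜,ℬ) = ∑_{A'∈𝒜,B'∈ℬ} f(A',B'). -/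
open Finset

variable {V : Type*} [Fintype V] [DecidableEq V]

/-- The partitions `𝒜` of `A` and `ℬ` of `B` form an `(α, c, t)`-shattering of `(A, B)`:
both have at most `t` parts, and the sum of `|A'||B'|` over pairs of parts with
`d(A', B') < α` is at least `c |A| |B|`. -/
noncomputable def IsShatteringPair (G : SimpleGraph V) [DecidableRel G.Adj]
    (α c t : ℝ) {A B : Finset V} (𝒜 : Finpartition A) (ℬ : Finpartition B) : Prop :=
  (𝒜.parts.card : ℝ) ≤ t ∧ (ℬ.parts.card : ℝ) ≤ t ∧
    c * A.card * B.card ≤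
      ∑ A' ∈ 𝒜.parts, ∑ B' ∈ ℬ.parts,
        if density G A' B' < α then (A'.card : ℝ) * B'.card else 0

lemma key_ineq (d x a : ℝ) (hd : 0 < d) (hx : 0 ≤ x) (ha : a ≤ d / 10) :
    d * Real.log d + (1 + Real.log d) * (x - d) +
      (if x < a then d / 2 else 0) ≤ x * Real.log x := by
  have hlog : ∀ y : ℝ, 0 < y → 1 - 1 / y ≤ Real.log y := by
    intro y hy
    have h := Real.log_le_sub_one_of_pos (show (0:ℝ) < 1/y by positivity)
    rw [Real.log_div one_ne_zero (ne_of_gt hy), Real.log_one] at h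
    linarith
  rcases eq_or_lt_of_le hx with h0 | h0
  · rw [← h0]
    split_ifs <;> simp <;> nlinarith
  by_cases hxa : x < a
  · simp only [if_pos hxa]
    have hxd : x ≤ d / 10 := le_of_lt (lt_of_lt_of_le hxa ha)
    set u : ℝ := (x / d) ^ ((1:ℝ)/3) with hu
    have hupos : 0 < u := Real.rpow_pos_of_pos (by positivity) _
    have hu3 : u ^ 3 = x / d := by
      rw [hu, ← Real.rpow_natCast (_ ^ _) 3, ← Real.rpow_mul (by positivity)]
      norm_num
    have hx_eq : x = d * u ^ 3 := by
      field_simp at hu3; linarith [hu3]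
    have hlogu : Real.log u = Real.log (x/d) / 3 := by
      rw [hu, Real.log_rpow (by positivity)]; ring
    have h1 : 1 - 1/u ≤ Real.log u := hlog u hupos
    have hlxd : Real.log (x/d) = Real.log x - Real.log d :=
      Real.log_div (ne_of_gt h0) (ne_of_gt hd)
    have h2 : 3 * (1 - 1/u) ≤ Real.log x - Real.log d := by
      rw [← hlxd]; rw [hlogu] at h1; linarith
    have h3 : x * (3 * (1 - 1/u)) ≤ x * (Real.log x - Real.log d) :=
      mul_le_mul_of_nonneg_left h2 hx
    have hxu : x * (3 * (1 - 1/u)) = 3 * d * u^3 - 3 * d * u^2 := by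
      rw [hx_eq]; field_simp
    have hu3le : u^3 ≤ 1/10 := by
      rw [hu3, div_le_iff₀ hd]; linarith
    have hule : u ≤ 1/2 := by
      by_contra h
      push_neg at h
      have : (1/2:ℝ)^3 < u^3 := by nlinarith
      norm_num at this; linarith
    have hpoly : 3 * u^2 ≤ 2 * u^3 + 1/2 := by
      nlinarith [sq_nonneg (u - 1/2), mul_nonneg (sq_nonneg (u - 1/2)) hupos.le,
        mul_nonneg (mul_nonneg hupos.le hupos.le) (by linarith : (0:ℝ) ≤ 1/2 - u)]
    nlinarith [h3, hxu, mul_pos hd (mul_pos hupos hupos)]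
  · simp only [if_neg hxa]
    have h1 : 1 - 1/(x/d) ≤ Real.log (x/d) := hlog _ (by positivity)
    have hlxd : Real.log (x/d) = Real.log x - Real.log d :=
      Real.log_div (ne_of_gt h0) (ne_of_gt hd)
    have h3 : x * (1 - 1/(x/d)) ≤ x * (Real.log x - Real.log d) :=
      mul_le_mul_of_nonneg_left (hlxd ▸ h1) hx
    have : x * (1 - 1/(x/d)) = x - d := by field_simp
    nlinarith [h3]

lemma part_sum {M : Type*} [AddCommMonoid M] {A : Finset V} (𝒜 : Finpartition A)
    (f : V → M) : ∑ a ∈ A, f a = ∑ A' ∈ 𝒜.parts, ∑ a ∈ A', f a := by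
  rw [show (∑ A' ∈ 𝒜.parts, ∑ a ∈ A', f a) = ∑ A' ∈ 𝒜.parts, ∑ a ∈ id A', f a from rfl,
    ← Finset.sum_biUnion 𝒜.supIndep.pairwiseDisjoint, 𝒜.biUnion_parts]

lemma edgeCount_part_sum (G : SimpleGraph V) [DecidableRel G.Adj] {A B : Finset V}
    (𝒜 : Finpartition A) (ℬ : Finpartition B) :
    edgeCount G A B = ∑ A' ∈ 𝒜.parts, ∑ B' ∈ ℬ.parts, edgeCount G A' B' := by
  have h : ∀ X Y : Finset V, edgeCount G X Y = ∑ a ∈ X, ∑ b ∈ Y, if G.Adj a b then 1 else 0 :=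
    fun X Y => by rw [edgeCount, card_filter, Finset.sum_product]
  simp only [h]
  rw [part_sum 𝒜]
  refine Finset.sum_congr rfl fun A' _ => ?_
  rw [Finset.sum_comm, part_sum ℬ]
  exact Finset.sum_congr rfl fun B' _ => Finset.sum_comm

theorem stmt_10 {V : Type*} [Fintype V] [DecidableEq V]
    (G : SimpleGraph V) [DecidableRel G.Adj]
    (α c t : ℝ) (hα : 0 < α)
    (A B : Finset V) (hAB : Disjoint A B) (hd : 10 * α ≤ density G A B)
    (𝒜 : Finpartition A) (ℬ : Finpartition B)
    (hshat : IsShatteringPair G α c t 𝒜 ℬ) :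
    fPair entf G A B + c / 2 * (edgeCount G A B : ℝ) / (Fintype.card V : ℝ) ^ 2 ≤
      fPart entf G 𝒜 ℬ := by
  obtain ⟨-, -, hsum⟩ := hshat
  set D := density G A B with hDdef
  have hDpos : 0 < D := lt_of_lt_of_le (by linarith) hd
  have hWpos : 0 < (A.card : ℝ) * B.card := by
    rcases lt_or_ge 0 ((A.card:ℝ) * B.card) with h|h
    · exact h
    · exfalso
      have h0 : (A.card:ℝ)*B.card = 0 := le_antisymm h (by positivity)
      have : D = 0 := by rw [hDdef, density, h0, div_zero]
      linarith
  have hApos : (0:ℝ) < A.card := by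
    rcases lt_or_ge 0 ((A.card:ℝ)) with h|h
    · exact h
    · exfalso; nlinarith [Nat.cast_nonneg (α := ℝ) B.card]
  have hAne : A.Nonempty := card_pos.mp (by exact_mod_cast hApos)
  have hnpos : 0 < (Fintype.card V : ℝ) := by
    have : 0 < Fintype.card V := Fintype.card_pos_iff.mpr ⟨hAne.choose⟩
    exact_mod_cast this
  have hed : (edgeCount G A B : ℝ) = D * ((A.card:ℝ) * B.card) := by
    rw [hDdef, density, div_mul_cancel₀ _ hWpos.ne']
  have hα' : α ≤ D / 10 := by linarith
  -- per-pair bound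
  have hkey : ∀ A' ∈ 𝒜.parts, ∀ B' ∈ ℬ.parts,
      ((A'.card:ℝ)*B'.card) * (D * Real.log D)
        + (1 + Real.log D) * ((edgeCount G A' B' : ℝ) - D * ((A'.card:ℝ)*B'.card))
        + (D/2) * (if density G A' B' < α then (A'.card:ℝ)*B'.card else 0)
      ≤ ((A'.card:ℝ)*B'.card) * entf (density G A' B') := by
    intro A' hA' B' hB'
    have hA'pos : (0:ℝ) < A'.card := by
      exact_mod_cast card_pos.mpr (𝒜.nonempty_of_mem_parts hA')
    have hB'pos : (0:ℝ) < B'.card := by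
      exact_mod_cast card_pos.mpr (ℬ.nonempty_of_mem_parts hB')
    have hw : (0:ℝ) < (A'.card:ℝ)*B'.card := mul_pos hA'pos hB'pos
    have hde : ((A'.card:ℝ)*B'.card) * density G A' B' = edgeCount G A' B' := by
      rw [density]; field_simp
    have hd0 : 0 ≤ density G A' B' := by rw [density]; positivity
    have h := mul_le_mul_of_nonneg_left (key_ineq D (density G A' B') α hDpos hd0 hα') hw.le
    rw [entf]
    rw [← hde]
    split_ifs at h ⊢ with hif
    · linarith [h]
    · linarith [h]
  have hsum2 := Finset.sum_le_sum fun A' hA' =>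
    Finset.sum_le_sum fun B' hB' => hkey A' hA' B' hB'
  -- total sums
  have hW : ∑ A' ∈ 𝒜.parts, ∑ B' ∈ ℬ.parts, (A'.card:ℝ)*B'.card = (A.card:ℝ)*B.card := by
    rw [← Finset.sum_mul_sum]
    have h1 : ∑ A' ∈ 𝒜.parts, (A'.card:ℝ) = A.card := by
      rw [← 𝒜.sum_card_parts]; push_cast; rfl
    have h2 : ∑ B' ∈ ℬ.parts, (B'.card:ℝ) = B.card := by
      rw [← ℬ.sum_card_parts]; push_cast; rfl
    rw [h1, h2]
  have hE : ∑ A' ∈ 𝒜.parts, ∑ B' ∈ ℬ.parts, (edgeCount G A' B' : ℝ) = edgeCount G A B := by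
    rw [edgeCount_part_sum G 𝒜 ℬ]; push_cast; rfl
  set S := ∑ A' ∈ 𝒜.parts, ∑ B' ∈ ℬ.parts,
      (if density G A' B' < α then (A'.card : ℝ) * B'.card else 0) with hS
  have hexpand : ∑ A' ∈ 𝒜.parts, ∑ B' ∈ ℬ.parts,
      (((A'.card:ℝ)*B'.card) * (D * Real.log D)
        + (1 + Real.log D) * ((edgeCount G A' B' : ℝ) - D * ((A'.card:ℝ)*B'.card))
        + (D/2) * (if density G A' B' < α then (A'.card:ℝ)*B'.card else 0))
      = ((A.card:ℝ)*B.card) * (D*Real.log D)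
        + (1 + Real.log D) * ((edgeCount G A B : ℝ) - D * ((A.card:ℝ)*B.card))
        + (D/2) * S := by
    have t1 : ∑ A' ∈ 𝒜.parts, ∑ B' ∈ ℬ.parts, ((A'.card:ℝ)*B'.card) * (D*Real.log D)
        = ((A.card:ℝ)*B.card) * (D*Real.log D) := by
      simp only [← Finset.sum_mul]; rw [hW]
    have t3 : ∑ A' ∈ 𝒜.parts, ∑ B' ∈ ℬ.parts,
        ((D/2) * if density G A' B' < α then (A'.card:ℝ)*B'.card else 0) = (D/2) * S := by
      rw [hS]; simp only [← Finset.mul_sum]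
    have t2 : ∑ A' ∈ 𝒜.parts, ∑ B' ∈ ℬ.parts,
        ((1 + Real.log D) * ((edgeCount G A' B' : ℝ) - D * ((A'.card:ℝ)*B'.card)))
        = (1 + Real.log D) * ((edgeCount G A B : ℝ) - D * ((A.card:ℝ)*B.card)) := by
      simp only [← Finset.mul_sum]
      congr 1
      rw [← hE, ← hW]
      simp only [Finset.sum_sub_distrib, ← Finset.mul_sum]
    simp only [Finset.sum_add_distrib]
    rw [t1, t2, t3]
  rw [hexpand] at hsum2
  -- shattering bound
  have hSge : c * ((A.card:ℝ) * B.card) ≤ S := by rw [← mul_assoc]; exact hsum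
  have hfinal : ((A.card:ℝ)*B.card) * entf D + c/2 * (edgeCount G A B : ℝ)
      ≤ ∑ A' ∈ 𝒜.parts, ∑ B' ∈ ℬ.parts, ((A'.card:ℝ)*B'.card) * entf (density G A' B') := by
    refine le_trans ?_ hsum2
    rw [entf, hed]
    have : (D/2) * (c * ((A.card:ℝ)*B.card)) ≤ (D/2) * S :=
      mul_le_mul_of_nonneg_left hSge (by linarith)
    nlinarith [this]
  -- divide by n²
  have hn2 : (0:ℝ) < (Fintype.card V : ℝ)^2 := by positivity
  have hgoal1 : fPair entf G A B + c / 2 * (edgeCount G A B : ℝ) / (Fintype.card V : ℝ) ^ 2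
      = (((A.card:ℝ)*B.card) * entf D + c/2 * (edgeCount G A B : ℝ)) / (Fintype.card V : ℝ)^2 := by
    rw [fPair]; ring
  have hgoal2 : fPart entf G 𝒜 ℬ
      = (∑ A' ∈ 𝒜.parts, ∑ B' ∈ ℬ.parts, ((A'.card:ℝ)*B'.card) * entf (density G A' B'))
          / (Fintype.card V : ℝ)^2 := by
    rw [fPart, Finset.sum_div]
    refine Finset.sum_congr rfl fun A' _ => ?_
    rw [Finset.sum_div]
    refine Finset.sum_congr rfl fun B' _ => ?_
    rw [fPair]; ring
  rw [hgoal1, hgoal2]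
  gcongr
end

section
/- Suppose 𝒬 is a partition of a set V of size n into at most k parts and υ > 0. Then there is a refinement 𝒬' of 𝒬 into at most (2υ^{-1} + 1)·k parts and a positive integer r such that all parts of 𝒬' have size at most r, and all but at most υ·n elements of V are in parts of size exactly r. -/
open Finset

lemma chunk_exists {α : Type*} [DecidableEq α] (r : ℕ) (hr : 0 < r) (t : Finset α) :
    ∃ P : Finpartition t, (∀ p ∈ P.parts, p.card ≤ r) ∧
      (∑ p ∈ P.parts.filter fun p => p.card ≠ r, p.card) ≤ r - 1 ∧
      P.parts.card ≤ t.card / r + 1 := by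
  induction t using Finset.strongInduction with
  | _ t ih =>
    rcases le_or_gt t.card r with h | h
    · rcases eq_or_ne t ∅ with rfl | hne
      · exact ⟨Finpartition.empty _, by simp [Finpartition.empty], by simp [Finpartition.empty],
          by simp [Finpartition.empty]⟩
      · refine ⟨Finpartition.indiscrete hne, ?_, ?_, ?_⟩
        · simp only [Finpartition.indiscrete_parts, mem_singleton]
          rintro p rfl; exact h
        · simp only [Finpartition.indiscrete_parts, filter_singleton]
          split_ifs with hc
          · rw [sum_singleton]
            exact Nat.le_pred_of_lt (lt_of_le_of_ne h hc)
          · simp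
        · simp [Finpartition.indiscrete_parts]
    · obtain ⟨u, hut, hu⟩ := Finset.exists_subset_card_eq h.le
      have hune : u.Nonempty := card_pos.1 (hu ▸ hr)
      have hss : t \ u ⊂ t := by
        apply Finset.sdiff_ssubset hut hune
      obtain ⟨P, h1, h2, h3⟩ := ih (t \ u) hss
      have hdisj : Disjoint (t \ u) u := sdiff_disjoint
      have hsup : (t \ u) ⊔ u = t := by
        rw [sup_eq_union, sdiff_union_of_subset hut]
      refine ⟨P.extend (by simpa [Finset.bot_eq_empty, ← Finset.nonempty_iff_ne_empty] using hune)
        hdisj hsup, ?_, ?_, ?_⟩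
      · intro p hp
        rw [Finpartition.extend_parts, mem_insert] at hp
        rcases hp with rfl | hp
        · exact hu.le
        · exact h1 p hp
      · rw [Finpartition.extend_parts, filter_insert, if_neg (by simp [hu])]
        exact h2
      · rw [Finpartition.card_extend]
        have hc : (t \ u).card = t.card - r := by rw [card_sdiff_of_subset hut, hu]
        have : t.card / r = (t.card - r) / r + 1 := by
          conv_lhs => rw [← Nat.sub_add_cancel h.le, Nat.add_div_right _ hr]
        rw [this]
        rw [hc] at h3; omega
        -- h3 : P.parts.card ≤ (t\u).card / r + 1

theorem stmt_11 {α : Type*} [DecidableEq α] (S : Finset α) (n : ℕ) (hn : S.card = n)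
    (k : ℕ) (Q : Finpartition S) (hQ : Q.parts.card ≤ k) (υ : ℝ) (hυ : 0 < υ) :
    ∃ Q' : Finpartition S, Q' ≤ Q ∧
      ((Q'.parts.card : ℝ) ≤ (2 * υ⁻¹ + 1) * k) ∧
      ∃ r : ℕ, 0 < r ∧ (∀ p ∈ Q'.parts, p.card ≤ r) ∧
        ((∑ p ∈ Q'.parts.filter fun p => p.card ≠ r, (p.card : ℝ)) ≤ υ * n) := by
  rcases eq_or_ne S ∅ with rfl | hS
  · have hparts : Q.parts = ∅ := by
      rw [← Finset.not_nonempty_iff_eq_empty, Finpartition.parts_nonempty_iff]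
      simp
    refine ⟨Q, le_refl _, ?_, 1, one_pos, ?_, ?_⟩
    · rw [hparts]
      simp only [card_empty, Nat.cast_zero]
      positivity
    · rw [hparts]; simp
    · rw [hparts]
      simp only [filter_empty, sum_empty]
      positivity
  · have hn0 : 0 < n := hn ▸ card_pos.2 (nonempty_iff_ne_empty.2 hS)
    have hk0 : 0 < k :=
      lt_of_lt_of_le (card_pos.2 (Q.parts_nonempty (by simpa using hS))) hQ
    have hnk : (0:ℝ) < υ * n / (2 * k) := by positivity
    set x : ℝ := υ * n / (2 * k) with hxdef
    set r := ⌈x⌉₊ with hrdef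
    have hr : 0 < r := Nat.ceil_pos.2 hnk
    choose C h1 h2 h3 using fun t : Finset α => chunk_exists r hr t
    have hdisj : (↑Q.parts.attach : Set {x // x ∈ Q.parts}).PairwiseDisjoint
        fun A => (C A.1).parts := by
      intro A _ B _ hAB
      simp only [Function.onFun]
      rw [Finset.disjoint_left]
      intro p hpA hpB
      have hAB' : A.1 ≠ B.1 := fun h => hAB (Subtype.ext h)
      exact (C A.1).ne_bot hpA (disjoint_self.1
        ((Q.disjoint A.2 B.2 hAB').mono ((C A.1).le hpA) ((C B.1).le hpB)))
    have hk' : (0:ℝ) < k := by exact_mod_cast hk0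
    have hn' : (0:ℝ) < n := by exact_mod_cast hn0
    refine ⟨Q.bind fun A _ => C A, ?_, ?_, r, hr, ?_, ?_⟩
    · intro b hb
      rw [Finpartition.mem_bind] at hb
      obtain ⟨A, hA, hb⟩ := hb
      exact ⟨A, hA, (C A).le hb⟩
    · rw [Finpartition.card_bind]
      have step1 : ((∑ A ∈ Q.parts.attach, (C A.1).parts.card : ℕ) : ℝ) ≤
          ∑ A ∈ Q.parts.attach, ((A.1.card : ℝ) / r + 1) := by
        push_cast
        refine Finset.sum_le_sum fun A _ => ?_
        have := h3 A.1
        calc ((C A.1).parts.card : ℝ) ≤ ((A.1.card / r + 1 : ℕ) : ℝ) := by exact_mod_cast this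
          _ = ((A.1.card / r : ℕ) : ℝ) + 1 := by push_cast; ring
          _ ≤ (A.1.card : ℝ) / r + 1 := by
              gcongr
              exact Nat.cast_div_le
      have step2 : ∑ A ∈ Q.parts.attach, ((A.1.card : ℝ) / r + 1) =
          (n : ℝ) / r + Q.parts.card := by
        rw [Finset.sum_add_distrib, Finset.sum_const, card_attach, ← Finset.sum_div]
        congr 2
        · rw [Finset.sum_attach Q.parts (fun A => (A.card : ℝ))]
          rw [← hn, ← Q.sum_card_parts]
          push_cast
          ring
        · simp
      have step3 : (n : ℝ) / r ≤ 2 * υ⁻¹ * k := by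
        have hxr : x ≤ (r : ℝ) := Nat.le_ceil x
        have : (n : ℝ) / r ≤ (n : ℝ) / x := by
          apply div_le_div_of_nonneg_left hn'.le hnk hxr
        refine this.trans (le_of_eq ?_)
        rw [hxdef]
        field_simp
      calc ((∑ A ∈ Q.parts.attach, (C A.1).parts.card : ℕ) : ℝ)
          ≤ (n : ℝ) / r + Q.parts.card := by rw [← step2]; exact step1
        _ ≤ 2 * υ⁻¹ * k + k := by
            have : (Q.parts.card : ℝ) ≤ k := by exact_mod_cast hQ
            linarith [step3]
        _ = (2 * υ⁻¹ + 1) * k := by ring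
    · intro p hp
      rw [Finpartition.mem_bind] at hp
      obtain ⟨A, hA, hp⟩ := hp
      exact h1 A p hp
    · rw [sum_filter, Finpartition.bind_parts, Finset.sum_biUnion hdisj]
      have inner : ∀ A ∈ Q.parts.attach,
          (∑ p ∈ (C A.1).parts, if p.card ≠ r then (p.card : ℝ) else 0) ≤ (r : ℝ) - 1 := by
        intro A _
        rw [← sum_filter]
        have := h2 A.1
        calc (∑ p ∈ (C A.1).parts.filter fun p => p.card ≠ r, (p.card : ℝ))
            = ((∑ p ∈ (C A.1).parts.filter fun p => p.card ≠ r, p.card : ℕ) : ℝ) := by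
              push_cast; ring
          _ ≤ ((r - 1 : ℕ) : ℝ) := by exact_mod_cast this
          _ = (r : ℝ) - 1 := by
              rw [Nat.cast_pred hr]
      calc (∑ A ∈ Q.parts.attach, ∑ p ∈ (C A.1).parts,
              if p.card ≠ r then (p.card : ℝ) else 0)
          ≤ ∑ _A ∈ Q.parts.attach, ((r : ℝ) - 1) := Finset.sum_le_sum inner
        _ = Q.parts.card * ((r : ℝ) - 1) := by rw [Finset.sum_const, card_attach]; ring
        _ ≤ k * ((r : ℝ) - 1) := by
            have h1' : (0:ℝ) ≤ (r : ℝ) - 1 := by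
              have : (1:ℝ) ≤ r := by exact_mod_cast hr
              linarith
            have : (Q.parts.card : ℝ) ≤ k := by exact_mod_cast hQ
            exact mul_le_mul_of_nonneg_right this h1'
        _ ≤ k * x := by
            have : (r : ℝ) < x + 1 := Nat.ceil_lt_add_one hnk.le
            have : (r : ℝ) - 1 ≤ x := by linarith
            exact mul_le_mul_of_nonneg_left this hk'.le
        _ = υ * n / 2 := by rw [hxdef]; field_simp
        _ ≤ υ * n := by
            have : (0:ℝ) ≤ υ * n := by positivity
            linarith
end
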